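/- Taylor expansion of ln G at 1: for every real x with |x| < 1, ln G(1+x) = (x/2)·(ln(2π) − 1) − (1+γ)·x²/2 + ∑_{j=3}^∞ (−1)^{j−1} · ζ(j−1) · x^j / j, where ζ is the Riemann zeta function and γ is the Euler–Mascheroni constant, and the series converges. -/

import Mathlib

open Real

/-- The double gamma function, defined by its Weierstrass product. -/
noncomputable def doubleGamma (x : ℝ) : ℝ :=
  (2 * π) ^ ((x - 1) / 2) *
    Real.exp (-(x - 1) * x / 2 - Real.eulerMascheroniConstant * (x - 1) ^ 2 / 2) *
    ∏' n : ℕ,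
      ((1 + (x - 1) / (n + 1)) ^ (n + 1) *
        Real.exp (-(x - 1) + (x - 1) ^ 2 / (2 * (n + 1))))

/-- The Riemann zeta function `ζ(m) = ∑_{n ≥ 1} n ^ (-m)` at integer arguments. -/
noncomputable def zetaNat (m : ℕ) : ℝ := ∑' n : ℕ, 1 / ((n : ℝ) + 1) ^ m

open Finset in
lemma row_hasSum {x : ℝ} (hx : |x| < 1) (n : ℕ) :
    HasSum (fun j : ℕ => (-1 : ℝ) ^ j * x ^ (j + 3) / ((j + 3) * ((n : ℝ) + 1) ^ (j + 2)))
      (((n : ℝ) + 1) * Real.log (1 + x / ((n : ℝ) + 1)) - x + x ^ 2 / (2 * ((n : ℝ) + 1))) := by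
  set a : ℝ := (n : ℝ) + 1 with ha
  have ha1 : (1 : ℝ) ≤ a := by rw [ha]; exact le_add_of_nonneg_left (Nat.cast_nonneg n)
  have ha0 : a ≠ 0 := by intro h; rw [h] at ha1; linarith
  have hy : |(-x / a)| < 1 := by
    rw [abs_div, abs_neg, abs_of_pos (by linarith : (0:ℝ) < a)]
    calc |x| / a ≤ |x| / 1 := by gcongr
      _ < 1 := by simpa using hx
  have h1 := (hasSum_pow_div_log_of_abs_lt_one hy).mul_left (-a)
  have hsub : 1 - (-x / a) = 1 + x / a := by ring
  rw [hsub, neg_mul_neg] at h1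
  have h2 : HasSum (fun m : ℕ => (-1 : ℝ) ^ m * x ^ (m + 1) / ((m + 1) * a ^ m))
      (a * Real.log (1 + x / a)) := by
    convert h1 using 2 with m
    · rfl
    have hp : (-x / a) ^ (m + 1) = (-1 : ℝ) ^ (m + 1) * (x ^ (m + 1) / a ^ (m + 1)) := by
      rw [div_pow, neg_pow]; ring
    rw [hp, pow_succ (-1 : ℝ) m, pow_succ a m]
    field_simp
  have h3 := (hasSum_nat_add_iff'
    (f := fun m : ℕ => (-1 : ℝ) ^ m * x ^ (m + 1) / ((m + 1) * a ^ m)) 2).2 h2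
  have h4 : HasSum (fun j : ℕ => (-1 : ℝ) ^ j * x ^ (j + 3) / ((j + 3) * a ^ (j + 2)))
      (a * Real.log (1 + x / a) -
        ∑ i ∈ range 2, (-1 : ℝ) ^ i * x ^ (i + 1) / ((i + 1) * a ^ i)) := by
    convert h3 using 2 with j
    · rfl
    push_cast
    rw [pow_add (-1 : ℝ) j 2]
    norm_num
    ring
  convert h4 using 1
  rw [Finset.sum_range_succ, Finset.sum_range_one]
  push_cast
  field_simp
  ring

lemma base_summable : Summable (fun n : ℕ => 1 / ((n : ℝ) + 1) ^ 2) := by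
  have := (Real.summable_one_div_nat_pow (p := 2)).2 (by norm_num)
  have h2 := (summable_nat_add_iff (f := fun n : ℕ => 1 / (n : ℝ) ^ 2) 1).2 this
  refine h2.congr fun n => ?_
  push_cast
  ring_nf

lemma abs_summable {x : ℝ} (hx : |x| < 1) :
    Summable (fun p : ℕ × ℕ =>
      |(-1 : ℝ) ^ p.2 * x ^ (p.2 + 3) / ((p.2 + 3) * ((p.1 : ℝ) + 1) ^ (p.2 + 2))|) := by
  have hx0 : (0 : ℝ) ≤ |x| := abs_nonneg x
  have habs : ∀ n j : ℕ,
      |(-1 : ℝ) ^ j * x ^ (j + 3) / ((j + 3) * ((n : ℝ) + 1) ^ (j + 2))|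
        = |x| ^ (j + 3) / ((j + 3) * ((n : ℝ) + 1) ^ (j + 2)) := by
    intro n j
    rw [abs_div, abs_mul, abs_pow, abs_pow, abs_neg, abs_one, one_pow, one_mul]
    congr 1
    rw [abs_of_pos]
    positivity
  have hbound : ∀ n j : ℕ,
      |x| ^ (j + 3) / ((j + 3) * ((n : ℝ) + 1) ^ (j + 2))
        ≤ |x| ^ j * (1 / ((n : ℝ) + 1) ^ 2) := by
    intro n j
    rw [mul_one_div]
    have h1 : |x| ^ (j + 3) ≤ |x| ^ j := pow_le_pow_of_le_one hx0 hx.le (by omega)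
    have h2 : ((n : ℝ) + 1) ^ 2 ≤ ((j : ℝ) + 3) * ((n : ℝ) + 1) ^ (j + 2) := by
      have := pow_le_pow_right₀ (by linarith [Nat.cast_nonneg (α := ℝ) n] : (1:ℝ) ≤ (n:ℝ)+1)
        (by omega : 2 ≤ j + 2)
      nlinarith [pow_pos (by linarith [Nat.cast_nonneg (α := ℝ) n] : (0:ℝ) < (n:ℝ)+1) (j+2),
        Nat.cast_nonneg (α := ℝ) j]
    exact div_le_div₀ (by positivity) h1 (by positivity) h2
  rw [show (fun p : ℕ × ℕ =>
      |(-1 : ℝ) ^ p.2 * x ^ (p.2 + 3) / ((p.2 + 3) * ((p.1 : ℝ) + 1) ^ (p.2 + 2))|)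
    = fun p : ℕ × ℕ => |x| ^ (p.2 + 3) / ((p.2 + 3) * ((p.1 : ℝ) + 1) ^ (p.2 + 2))
    from funext fun p => habs p.1 p.2]
  rw [summable_prod_of_nonneg (fun p => by positivity)]
  constructor
  · intro n
    apply Summable.of_nonneg_of_le (fun j => by positivity) (hbound n)
    exact (summable_geometric_of_lt_one hx0 hx).mul_right _
  · apply Summable.of_nonneg_of_le (fun n => tsum_nonneg fun j => by positivity)
      (fun n => ?_) (base_summable.mul_left (∑' j : ℕ, |x| ^ j))
    calc ∑' j : ℕ, |x| ^ (j + 3) / ((j + 3) * ((n : ℝ) + 1) ^ (j + 2))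
        ≤ ∑' j : ℕ, |x| ^ j * (1 / ((n : ℝ) + 1) ^ 2) := by
          apply Summable.tsum_le_tsum (hbound n)
          · apply Summable.of_nonneg_of_le (fun j => by positivity) (hbound n)
            exact (summable_geometric_of_lt_one hx0 hx).mul_right _
          · exact (summable_geometric_of_lt_one hx0 hx).mul_right _
      _ = (∑' j : ℕ, |x| ^ j) * (1 / ((n : ℝ) + 1) ^ 2) := tsum_mul_right

lemma zeta_hasSum (m : ℕ) (hm : 2 ≤ m) :
    HasSum (fun n : ℕ => 1 / ((n : ℝ) + 1) ^ m) (zetaNat m) := by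
  have hs : Summable (fun n : ℕ => 1 / ((n : ℝ) + 1) ^ m) := by
    apply Summable.of_nonneg_of_le (fun n => by positivity) (fun n => ?_) base_summable
    apply div_le_div₀ (by norm_num) le_rfl (by positivity)
    exact pow_le_pow_right₀ (by linarith [Nat.cast_nonneg (α := ℝ) n]) hm
  exact hs.hasSum

theorem log_doubleGamma_taylor (x : ℝ) (hx : |x| < 1) :
    HasSum
      (fun j : ℕ => (-1 : ℝ) ^ (j + 3 - 1) * zetaNat (j + 3 - 1) * x ^ (j + 3) / (j + 3))
      (Real.log (doubleGamma (1 + x)) -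
        (x / 2 * (Real.log (2 * π) - 1) -
          (1 + Real.eulerMascheroniConstant) * x ^ 2 / 2)) := by
  have hg : Summable (fun p : ℕ × ℕ =>
      (-1 : ℝ) ^ p.2 * x ^ (p.2 + 3) / ((p.2 + 3) * ((p.1 : ℝ) + 1) ^ (p.2 + 2))) :=
    (abs_summable hx).of_abs
  set T : ℝ := ∑' p : ℕ × ℕ,
      (-1 : ℝ) ^ p.2 * x ^ (p.2 + 3) / ((p.2 + 3) * ((p.1 : ℝ) + 1) ^ (p.2 + 2)) with hTdef
  have hT := hg.hasSum
  -- sum over rows (fixed n): gives the series of logs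
  have hrows : HasSum (fun n : ℕ =>
      ((n : ℝ) + 1) * Real.log (1 + x / ((n : ℝ) + 1)) - x + x ^ 2 / (2 * ((n : ℝ) + 1))) T :=
    hT.prod_fiberwise fun n => row_hasSum hx n
  -- sum over columns (fixed j): gives the zeta series
  have hT' : HasSum (fun p : ℕ × ℕ =>
      (-1 : ℝ) ^ p.1 * x ^ (p.1 + 3) / ((p.1 + 3) * ((p.2 : ℝ) + 1) ^ (p.1 + 2))) T := by
    exact ((Equiv.prodComm ℕ ℕ).hasSum_iff).2 hT
  have hcols : HasSum (fun j : ℕ =>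
      (-1 : ℝ) ^ j * zetaNat (j + 2) * x ^ (j + 3) / ((j : ℝ) + 3)) T := by
    refine hT'.prod_fiberwise fun j => ?_
    have h := (zeta_hasSum (j + 2) (by omega)).mul_left
      ((-1 : ℝ) ^ j * x ^ (j + 3) / ((j : ℝ) + 3))
    rw [show (-1 : ℝ) ^ j * x ^ (j + 3) / ((j : ℝ) + 3) * zetaNat (j + 2)
        = (-1 : ℝ) ^ j * zetaNat (j + 2) * x ^ (j + 3) / ((j : ℝ) + 3) from by ring] at h
    have hfe : (fun n : ℕ => (-1 : ℝ) ^ j * x ^ (j + 3) / ((j : ℝ) + 3)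
        * (1 / ((n : ℝ) + 1) ^ (j + 2)))
        = fun n : ℕ => (-1 : ℝ) ^ j * x ^ (j + 3) / (((j : ℝ) + 3) * ((n : ℝ) + 1) ^ (j + 2)) := by
      funext n
      rw [mul_one_div, div_div]
    rw [hfe] at h
    exact h
  -- exponentiate the row sums to identify T with the log of the product
  have hprod := hrows.rexp
  have hPeq : ∀ n : ℕ, Real.exp
      (((n : ℝ) + 1) * Real.log (1 + x / ((n : ℝ) + 1)) - x + x ^ 2 / (2 * ((n : ℝ) + 1)))
      = (1 + x / ((n : ℝ) + 1)) ^ (n + 1) * Real.exp (-x + x ^ 2 / (2 * ((n : ℝ) + 1))) := by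
    intro n
    have hn1 : (0 : ℝ) < (n : ℝ) + 1 := by positivity
    have hu : (0 : ℝ) < 1 + x / ((n : ℝ) + 1) := by
      have : |x / ((n : ℝ) + 1)| < 1 := by
        rw [abs_div, abs_of_pos hn1]
        calc |x| / ((n : ℝ) + 1) ≤ |x| / 1 := by gcongr; linarith [Nat.cast_nonneg (α := ℝ) n]
          _ < 1 := by simpa using hx
      have := abs_lt.1 this
      linarith [this.1]
    rw [show (((n : ℝ) + 1) * Real.log (1 + x / ((n : ℝ) + 1)) - x + x ^ 2 / (2 * ((n : ℝ) + 1)))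
        = ((n : ℝ) + 1) * Real.log (1 + x / ((n : ℝ) + 1)) + (-x + x ^ 2 / (2 * ((n : ℝ) + 1)))
        from by ring,
      Real.exp_add]
    congr 1
    rw [show ((n : ℝ) + 1) = ((n + 1 : ℕ) : ℝ) from by push_cast; ring,
      Real.exp_nat_mul]
    congr 1
    rw [Real.exp_log (by push_cast; exact hu)]
  have hP : HasProd (fun n : ℕ =>
      (1 + x / ((n : ℝ) + 1)) ^ (n + 1) * Real.exp (-x + x ^ 2 / (2 * ((n : ℝ) + 1))))
      (Real.exp T) := by
    convert hprod using 1
    exact funext fun n => (hPeq n).symm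
  -- compute log of doubleGamma (1 + x)
  have hπ : (0 : ℝ) < 2 * π := by positivity
  have hdg : doubleGamma (1 + x) = (2 * π) ^ (x / 2) *
      Real.exp (-x * (1 + x) / 2 - Real.eulerMascheroniConstant * x ^ 2 / 2) *
      Real.exp T := by
    rw [doubleGamma]
    simp only [add_sub_cancel_left]
    rw [hP.tprod_eq]
  have hlog : Real.log (doubleGamma (1 + x)) =
      x / 2 * Real.log (2 * π) +
      (-x * (1 + x) / 2 - Real.eulerMascheroniConstant * x ^ 2 / 2) + T := by
    rw [hdg, Real.log_mul (by positivity) (Real.exp_ne_zero _),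
      Real.log_mul (by positivity) (Real.exp_ne_zero _),
      Real.log_rpow hπ, Real.log_exp, Real.log_exp]
  -- conclude
  have hfinal : Real.log (doubleGamma (1 + x)) -
      (x / 2 * (Real.log (2 * π) - 1) -
        (1 + Real.eulerMascheroniConstant) * x ^ 2 / 2) = T := by
    rw [hlog]; ring
  rw [hfinal]
  convert hcols using 2 with j
  have h31 : j + 3 - 1 = j + 2 := rfl
  rw [h31, pow_add]
  norm_num
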